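/- Let A be a Hermitian n×n complex matrix, let m be its maximal spectral multiplicity (the maximum over eigenvalues λ of dim ker(A − λI)), and let L be a cyclic subspace for A (span{ A^k x : k ∈ ℕ, x ∈ L } = ℂⁿ). Then there exists an m-dimensional subspace M ⊆ L that is itself cyclic for A, i.e. span{ A^k x : k ∈ ℕ, x ∈ M } = ℂⁿ. -/

import Mathlib

open MeasureTheory Module

/-- The self-adjoint endomorphism of `ℂⁿ` (with the Euclidean inner product)
associated with a matrix `A`. -/
noncomputable def matEnd (n : ℕ) (A : Matrix (Fin n) (Fin n) ℂ) :
    Module.End ℂ (EuclideanSpace ℂ (Fin n)) :=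
  Matrix.toEuclideanLin A

open Submodule Polynomial

section Avoid

/-- Avoidance lemma. -/
theorem avoid_lemma {K V ι : Type*} [Field K] [Infinite K] [AddCommGroup V] [Module K V]
    (L : Submodule K V) (s : Finset ι) (W : ι → Submodule K V)
    (h : ∀ i ∈ s, ¬ L ≤ W i) : ∃ x ∈ L, ∀ i ∈ s, x ∉ W i := by
  classical
  induction s using Finset.induction_on with
  | empty => exact ⟨0, L.zero_mem, by simp⟩
  | @insert a s ha ih =>
    obtain ⟨x, hxL, hx⟩ := ih fun i hi => h i (Finset.mem_insert_of_mem hi)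
    obtain ⟨y, hyL, hya⟩ : ∃ y ∈ L, y ∉ W a := by
      by_contra hc
      push_neg at hc
      exact h a (Finset.mem_insert_self a s) hc
    have hsub : ∀ j ∈ insert a s, {c : K | x + c • y ∈ W j}.Subsingleton := by
      intro j hj c hc c' hc'
      by_contra hne
      have hy : y ∈ W j := by
        have h1 : (c - c') • y ∈ W j := by
          have := (W j).sub_mem hc hc'
          simpa [sub_smul, add_sub_add_left_eq_sub] using this
        have hcc : c - c' ≠ 0 := sub_ne_zero.mpr hne
        simpa [smul_smul, inv_mul_cancel₀ hcc] using (W j).smul_mem (c - c')⁻¹ h1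
      have hx' : x ∈ W j := by
        have := (W j).sub_mem hc ((W j).smul_mem c hy)
        simpa using this
      rcases Finset.mem_insert.mp hj with rfl | hjs
      · exact hya hy
      · exact hx j hjs hx'
    have hfin : (⋃ j ∈ (insert a s : Finset ι), {c : K | x + c • y ∈ W j}).Finite :=
      Set.Finite.biUnion (insert a s).finite_toSet fun j hj => (hsub j hj).finite
    obtain ⟨c, hc⟩ := hfin.infinite_compl.nonempty
    refine ⟨x + c • y, L.add_mem hxL (L.smul_mem c hyL), fun j hj hmem => ?_⟩
    exact hc (Set.mem_biUnion hj hmem)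

end Avoid

section Spectral

variable {K V : Type*} [Field K] [AddCommGroup V] [Module K V]

/-- The Lagrange interpolation polynomial taking value `1` at `μ` and `0` at the
other points of `S`. -/
noncomputable def lagPoly (S : Finset K) (μ : K) : K[X] :=
  letI := Classical.decEq K
  ∏ ν ∈ S.erase μ, Polynomial.C (μ - ν)⁻¹ * (Polynomial.X - Polynomial.C ν)

theorem lagPoly_eval_self (S : Finset K) (μ : K) : (lagPoly S μ).eval μ = 1 := by
  letI := Classical.decEq K
  rw [lagPoly, Polynomial.eval_prod]
  refine Finset.prod_eq_one fun ν hν => ?_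
  have hn : μ - ν ≠ 0 := sub_ne_zero.mpr (Ne.symm (Finset.ne_of_mem_erase hν))
  simp [inv_mul_cancel₀ hn]

theorem lagPoly_eval_other {S : Finset K} {μ ν : K} (hν : ν ∈ S) (hne : ν ≠ μ) :
    (lagPoly S μ).eval ν = 0 := by
  letI := Classical.decEq K
  rw [lagPoly, Polynomial.eval_prod]
  refine Finset.prod_eq_zero (Finset.mem_erase.mpr ⟨hne, hν⟩) ?_
  simp

variable (T : Module.End K V)

theorem pow_apply_of_mem_eigenspace {μ : K} {x : V} (hx : x ∈ T.eigenspace μ) (k : ℕ) :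
    (T ^ k) x = μ ^ k • x := by
  by_cases h0 : x = 0
  · simp [h0]
  · exact Module.End.HasEigenvector.pow_apply ⟨hx, h0⟩ k

theorem proj_mem {S : Finset K} (hS : ∀ μ, μ ∈ S ↔ T.HasEigenvalue μ)
    (htop : (⨆ μ : K, T.eigenspace μ) = ⊤) (μ : K) (x : V) :
    (aeval T (lagPoly S μ)) x ∈ T.eigenspace μ := by
  have hx : x ∈ ⨆ ν : K, T.eigenspace ν := htop ▸ Submodule.mem_top
  refine Submodule.iSup_induction (motive := fun y => (aeval T (lagPoly S μ)) y ∈ T.eigenspace μ)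
    (fun ν => T.eigenspace ν) hx ?_ (by simp) ?_
  · intro ν v hv
    by_cases h0 : v = 0
    · simp [h0]
    rw [Module.End.aeval_apply_of_hasEigenvector ⟨hv, h0⟩]
    by_cases hνμ : ν = μ
    · exact Submodule.smul_mem _ _ (hνμ ▸ hv)
    · have hνS : ν ∈ S := (hS ν).mpr (Module.End.hasEigenvalue_of_hasEigenvector ⟨hv, h0⟩)
      rw [lagPoly_eval_other hνS hνμ, zero_smul]
      exact Submodule.zero_mem _
  · intro a b ha hb
    rw [map_add]
    exact Submodule.add_mem _ ha hb

theorem proj_id {μ : K} {x : V} (hx : x ∈ T.eigenspace μ) (S : Finset K) :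
    (aeval T (lagPoly S μ)) x = x := by
  by_cases h0 : x = 0
  · simp [h0]
  · rw [Module.End.aeval_apply_of_hasEigenvector ⟨hx, h0⟩, lagPoly_eval_self, one_smul]

theorem aeval_apply_mem_iSup (M : Submodule K V) (p : K[X]) {x : V} (hx : x ∈ M) :
    (aeval T p) x ∈ ⨆ k : ℕ, Submodule.map (T ^ k) M := by
  rw [Polynomial.aeval_eq_sum_range]
  rw [LinearMap.sum_apply]
  refine Submodule.sum_mem _ fun i _ => ?_
  rw [LinearMap.smul_apply]
  refine Submodule.smul_mem _ _ ?_
  exact le_iSup (fun k => Submodule.map (T ^ k) M) i (Submodule.mem_map_of_mem hx)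

theorem map_proj_eq {S : Finset K} (hS : ∀ μ, μ ∈ S ↔ T.HasEigenvalue μ)
    (htop : (⨆ μ : K, T.eigenspace μ) = ⊤) {L : Submodule K V}
    (hL : (⨆ k : ℕ, Submodule.map (T ^ k) L) = ⊤) (μ : K) :
    Submodule.map (aeval T (lagPoly S μ)) L = T.eigenspace μ := by
  refine le_antisymm ?_ ?_
  · rintro _ ⟨x, -, rfl⟩
    exact proj_mem T hS htop μ x
  · intro v hv
    have hv' : (aeval T (lagPoly S μ)) v = v := proj_id T hv S
    have hvtop : v ∈ ⨆ k : ℕ, Submodule.map (T ^ k) L := hL ▸ Submodule.mem_top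
    have key : Submodule.map (aeval T (lagPoly S μ)) (⨆ k : ℕ, Submodule.map (T ^ k) L) ≤
        Submodule.map (aeval T (lagPoly S μ)) L := by
      rw [Submodule.map_iSup]
      refine iSup_le fun k => ?_
      rw [← Submodule.map_comp]
      have hcomm : (aeval T (lagPoly S μ)).comp (T ^ k) =
          (T ^ k).comp (aeval T (lagPoly S μ)) := by
        have hTk : T ^ k = aeval T (Polynomial.X ^ k : K[X]) := by
          rw [map_pow, aeval_X]
        show aeval T (lagPoly S μ) * T ^ k = T ^ k * aeval T (lagPoly S μ)
        rw [hTk, ← map_mul, ← map_mul, mul_comm]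
      rw [hcomm, Submodule.map_comp]
      rintro _ ⟨w, ⟨x, hxL, rfl⟩, rfl⟩
      have hwe : (aeval T (lagPoly S μ)) x ∈ T.eigenspace μ := proj_mem T hS htop μ x
      rw [pow_apply_of_mem_eigenspace T hwe k, ← LinearMap.map_smul]
      exact Submodule.mem_map_of_mem (L.smul_mem _ hxL)
    rw [← hv']
    exact key (Submodule.mem_map_of_mem hvtop)


section Ladder

variable {K V : Type*} [Field K] [Infinite K] [AddCommGroup V] [Module K V]
  [FiniteDimensional K V]

theorem ladder (T : Module.End K V) (S : Finset K) (hS : ∀ μ, μ ∈ S ↔ T.HasEigenvalue μ)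
    (htop : (⨆ μ : K, T.eigenspace μ) = ⊤) (L : Submodule K V)
    (hL : (⨆ k : ℕ, Submodule.map (T ^ k) L) = ⊤)
    (m : ℕ) (μ₀ : K) (hμ₀ : T.HasEigenvalue μ₀)
    (hμ₀m : Module.finrank K (T.eigenspace μ₀) = m) :
    ∀ j : ℕ, j ≤ m → ∃ M : Submodule K V, M ≤ L ∧ Module.finrank K M = j ∧
      ∀ μ ∈ S, min j (Module.finrank K (T.eigenspace μ)) ≤
        Module.finrank K (Submodule.map (aeval T (lagPoly S μ)) M) := by
  classical
  intro j
  induction j with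
  | zero =>
    intro _
    exact ⟨⊥, bot_le, finrank_bot K V, fun μ _ => by simp⟩
  | succ j ih =>
    intro hj1
    obtain ⟨M, hML, hMrank, hMproj⟩ := ih (Nat.le_of_succ_le hj1)
    set P : K → Module.End K V := fun μ => aeval T (lagPoly S μ) with hP
    -- the "bad" eigenvalues, where the projection of M is not yet everything
    set s' : Finset K := S.filter (fun μ => Submodule.map (P μ) M ≠ T.eigenspace μ) with hs'
    have hWproper : ∀ μ ∈ s', ¬ L ≤ Submodule.comap (P μ) (Submodule.map (P μ) M) := by
      intro μ hμ hle
      obtain ⟨hμS, hμne⟩ := Finset.mem_filter.mp hμ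
      apply hμne
      refine le_antisymm ?_ ?_
      · rintro _ ⟨x, -, rfl⟩
        exact proj_mem T hS htop μ x
      · rw [← map_proj_eq T hS htop hL μ]
        exact Submodule.map_le_iff_le_comap.mpr hle
    obtain ⟨x, hxL, hxW⟩ := avoid_lemma L s' (fun μ => Submodule.comap (P μ) (Submodule.map (P μ) M)) hWproper
    -- μ₀ is bad, hence x ∉ M
    have hμ₀S : μ₀ ∈ S := (hS μ₀).mpr hμ₀
    have hμ₀bad : μ₀ ∈ s' := by
      refine Finset.mem_filter.mpr ⟨hμ₀S, fun heq => ?_⟩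
      have h1 : Module.finrank K (Submodule.map (P μ₀) M) ≤ j :=
        hMrank ▸ Submodule.finrank_map_le _ _
      rw [heq, hμ₀m] at h1
      omega
    have hxM : x ∉ M := fun hxM =>
      hxW μ₀ hμ₀bad (Submodule.mem_comap.mpr (Submodule.mem_map_of_mem hxM))
    have hx0 : x ≠ 0 := fun h => hxM (h ▸ M.zero_mem)
    refine ⟨M ⊔ K ∙ x, sup_le hML ((Submodule.span_singleton_le_iff_mem x L).mpr hxL), ?_, ?_⟩
    · -- rank computation
      have hinf : M ⊓ (K ∙ x) = ⊥ := by
        rw [eq_bot_iff]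
        rintro v ⟨hvM, hvx⟩
        obtain ⟨c, rfl⟩ := Submodule.mem_span_singleton.mp hvx
        rcases eq_or_ne c 0 with rfl | hc
        · simp
        · exact absurd (by simpa [smul_smul, inv_mul_cancel₀ hc] using M.smul_mem c⁻¹ hvM) hxM
      have := Submodule.finrank_sup_add_finrank_inf_eq M (K ∙ x)
      rw [hinf, finrank_bot, hMrank, finrank_span_singleton hx0] at this
      omega
    · intro μ hμS
      show min (j+1) (Module.finrank K (T.eigenspace μ)) ≤
        Module.finrank K (Submodule.map (P μ) (M ⊔ K ∙ x))
      by_cases hbad : μ ∈ s'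
      · -- image grows by one
        have hPx : (P μ) x ∉ Submodule.map (P μ) M := fun hc =>
          hxW μ hbad (Submodule.mem_comap.mpr hc)
        have hPx0 : (P μ) x ≠ 0 := fun h => hPx (h ▸ Submodule.zero_mem _)
        have hmap : Submodule.map (P μ) (M ⊔ K ∙ x) =
            Submodule.map (P μ) M ⊔ (K ∙ (P μ) x) := by
          rw [Submodule.map_sup, Submodule.map_span, Set.image_singleton]
        have hinf : Submodule.map (P μ) M ⊓ (K ∙ (P μ) x) = ⊥ := by
          rw [eq_bot_iff]
          rintro v ⟨hvM, hvx⟩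
          obtain ⟨c, rfl⟩ := Submodule.mem_span_singleton.mp hvx
          rcases eq_or_ne c 0 with rfl | hc
          · simp
          · exact absurd (by simpa [smul_smul, inv_mul_cancel₀ hc] using
              Submodule.smul_mem _ c⁻¹ hvM) hPx
        have hsum := Submodule.finrank_sup_add_finrank_inf_eq
          (Submodule.map (P μ) M) (K ∙ (P μ) x)
        rw [hinf, finrank_bot, finrank_span_singleton hPx0] at hsum
        have hold : min j (Module.finrank K (T.eigenspace μ)) ≤
            Module.finrank K (Submodule.map (P μ) M) := hMproj μ hμS
        rw [hmap]
        omega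
      · -- image is already everything
        have heq : Submodule.map (P μ) M = T.eigenspace μ := by
          by_contra hne
          exact hbad (Finset.mem_filter.mpr ⟨hμS, hne⟩)
        have hle : Module.finrank K (T.eigenspace μ) ≤
            Module.finrank K (Submodule.map (P μ) (M ⊔ K ∙ x)) := by
          rw [← heq]
          exact Submodule.finrank_mono (Submodule.map_mono le_sup_left)
        omega

end Ladder

/-- **Second assertion of Corollary 3, finite-dimensional case.**
Let `A` be a Hermitian `n × n` matrix with maximal spectral multiplicity `m`
(the greatest of the eigenspace dimensions) and let `L` be a cyclic subspace for
`A` (`span {A^k x : k ∈ ℕ, x ∈ L} = ℂⁿ`).  Then there exists an `m`-dimensional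
subspace `M ⊆ L` which is itself cyclic for `A`. -/
theorem stmt_10 (n m : ℕ) (A : Matrix (Fin n) (Fin n) ℂ) (hA : A.IsHermitian)
    (hm : IsGreatest {d : ℕ | ∃ μ : ℂ, (matEnd n A).HasEigenvalue μ ∧
      d = Module.finrank ℂ ((matEnd n A).eigenspace μ)} m)
    (L : Submodule ℂ (EuclideanSpace ℂ (Fin n)))
    (hL : (⨆ k : ℕ, Submodule.map (matEnd n A ^ k) L) = ⊤) :
    ∃ M : Submodule ℂ (EuclideanSpace ℂ (Fin n)), M ≤ L ∧
      Module.finrank ℂ M = m ∧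
      (⨆ k : ℕ, Submodule.map (matEnd n A ^ k) M) = ⊤ := by
  classical
  set T : Module.End ℂ (EuclideanSpace ℂ (Fin n)) := matEnd n A with hT
  -- the spectral theorem
  have hsym : (Matrix.toEuclideanLin A).IsSymmetric := Matrix.isHermitian_iff_isSymmetric.mp hA
  have htop : (⨆ μ : ℂ, T.eigenspace μ) = ⊤ := by
    rw [← Submodule.orthogonal_eq_bot_iff]
    exact hsym.orthogonalComplement_iSup_eigenspaces_eq_bot
  -- the finite set of eigenvalues
  have hmp0 : minpoly ℂ T ≠ 0 := minpoly.ne_zero (Algebra.IsIntegral.isIntegral (R := ℂ) T)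
  set S : Finset ℂ := (minpoly ℂ T).roots.toFinset with hSdef
  have hS : ∀ μ, μ ∈ S ↔ T.HasEigenvalue μ := by
    intro μ
    rw [hSdef, Multiset.mem_toFinset, Polynomial.mem_roots hmp0,
      Module.End.hasEigenvalue_iff_isRoot]
  -- eigenvalue of maximal multiplicity
  obtain ⟨μ₀, hμ₀, hμ₀m⟩ := hm.1
  have hub : ∀ μ : ℂ, T.HasEigenvalue μ → Module.finrank ℂ (T.eigenspace μ) ≤ m :=
    fun μ hμ => hm.2 ⟨μ, hμ, rfl⟩
  obtain ⟨M, hML, hMrank, hMproj⟩ :=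
    ladder T S hS htop L hL m μ₀ hμ₀ hμ₀m.symm m le_rfl
  refine ⟨M, hML, hMrank, ?_⟩
  -- for each eigenvalue, the projection of M is the whole eigenspace
  have heig : ∀ μ ∈ S, Submodule.map (Polynomial.aeval T (lagPoly S μ)) M = T.eigenspace μ := by
    intro μ hμ
    refine Submodule.eq_of_le_of_finrank_le ?_ ?_
    · rintro _ ⟨x, -, rfl⟩
      exact proj_mem T hS htop μ x
    · have hd : Module.finrank ℂ (T.eigenspace μ) ≤ m := hub μ ((hS μ).mp hμ)
      have := hMproj μ hμ
      omega
  -- conclude cyclicity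
  rw [eq_top_iff, ← htop]
  refine iSup_le fun μ => ?_
  by_cases hμ : μ ∈ S
  · rw [← heig μ hμ]
    rintro _ ⟨x, hxM, rfl⟩
    exact aeval_apply_mem_iSup T M _ hxM
  · have : T.eigenspace μ = ⊥ := by
      by_contra hne
      exact hμ ((hS μ).mpr (Module.End.hasEigenvalue_iff.mpr hne))
    rw [this]
    exact bot_le
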